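/- Let C be a cyclic group of order ℓ^h and M a finitely generated ℤℓ[C]-module that is projective (equivalently, ℤℓ-free with ℚℓ ⊗ M a free summand decomposition according to the characters χ_0, …, χ_h of ℚℓ[C]). Write the character of ℚℓ ⊗ M as Σ n_i χ_i, where χ_0 is the trivial character. Then the order of H²(C, M) (Tate Ĥ⁰) depends only on n_0, and the order of H¹(C, M) depends only on the n_i for i > 0. -/

import Mathlib

/-- Scalar multiplication by a group-ring element, as an additive endomorphism. -/
noncomputable def gSmul (ℓ : ℕ) [Fact (Nat.Prime ℓ)] (C : Type*) [CommGroup C]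
    (M : Type*) [AddCommGroup M] [Module (MonoidAlgebra ℤ_[ℓ] C) M]
    (r : MonoidAlgebra ℤ_[ℓ] C) : M →+ M :=
  AddMonoidHom.mk' (fun m => r • m) (fun a b => smul_add r a b)

/-- The norm map `m ↦ ν • m`, `ν = ∑_{c ∈ C} c`. -/
noncomputable def gNorm (ℓ : ℕ) [Fact (Nat.Prime ℓ)] (C : Type*) [CommGroup C] [Fintype C]
    (M : Type*) [AddCommGroup M] [Module (MonoidAlgebra ℤ_[ℓ] C) M] : M →+ M :=
  gSmul ℓ C M (∑ c : C, MonoidAlgebra.of ℤ_[ℓ] C c)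

/-- The map `m ↦ c • m - m`. -/
noncomputable def gSub (ℓ : ℕ) [Fact (Nat.Prime ℓ)] (C : Type*) [CommGroup C]
    (M : Type*) [AddCommGroup M] [Module (MonoidAlgebra ℤ_[ℓ] C) M] (c : C) : M →+ M :=
  gSmul ℓ C M (MonoidAlgebra.of ℤ_[ℓ] C c - 1)

/-- The subgroup of `C`-invariants. -/
noncomputable def gFixed (ℓ : ℕ) [Fact (Nat.Prime ℓ)] (C : Type*) [CommGroup C]
    (M : Type*) [AddCommGroup M] [Module (MonoidAlgebra ℤ_[ℓ] C) M] : AddSubgroup M :=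
  ⨅ c : C, (gSub ℓ C M c).ker

/-- The order of `Ĥ⁰(C,M) = M^C / ν·M` (Tate `H²` for cyclic `C`). -/
noncomputable def gH0 (ℓ : ℕ) [Fact (Nat.Prime ℓ)] (C : Type*) [CommGroup C] [Fintype C]
    (M : Type*) [AddCommGroup M] [Module (MonoidAlgebra ℤ_[ℓ] C) M] : ℕ :=
  ((gNorm ℓ C M).range).relIndex (gFixed ℓ C M)

/-- The order of `H¹(C,M) = Ker ν / (σ-1)·M`, for a generator `σ` of `C`. -/
noncomputable def gH1 (ℓ : ℕ) [Fact (Nat.Prime ℓ)] (C : Type*) [CommGroup C] [Fintype C]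
    (M : Type*) [AddCommGroup M] [Module (MonoidAlgebra ℤ_[ℓ] C) M] (σ : C) : ℕ :=
  ((gSub ℓ C M σ).range).relIndex ((gNorm ℓ C M).ker)

/-- The standard indecomposable `ℤℓ[C]`-lattice of character `χ_i`:
`ℤℓ[C]/(Φ_{ℓ^i}(σ)) ≅ ℤℓ[ζ_{ℓ^i}]` for a generator `σ` of `C`. -/
noncomputable def gStd (ℓ : ℕ) [Fact (Nat.Prime ℓ)] (C : Type*) [CommGroup C]
    (σ : C) (i : ℕ) : Type _ :=
  MonoidAlgebra ℤ_[ℓ] C ⧸ Ideal.span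
    {Polynomial.aeval (MonoidAlgebra.of ℤ_[ℓ] C σ) (Polynomial.cyclotomic (ℓ ^ i) ℤ_[ℓ])}

noncomputable instance (ℓ : ℕ) [Fact (Nat.Prime ℓ)] (C : Type*) [CommGroup C]
    (σ : C) (i : ℕ) : AddCommGroup (gStd ℓ C σ i) := by unfold gStd; infer_instance

noncomputable instance (ℓ : ℕ) [Fact (Nat.Prime ℓ)] (C : Type*) [CommGroup C]
    (σ : C) (i : ℕ) : Module (MonoidAlgebra ℤ_[ℓ] C) (gStd ℓ C σ i) := by
  unfold gStd; infer_instance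


section RelIndex

open AddSubgroup

/-- relindex is invariant under an additive equivalence. -/
lemma relindex_map_addEquiv {M M' : Type*} [AddCommGroup M] [AddCommGroup M']
    (e : M ≃+ M') (H K : AddSubgroup M) :
    (H.map e.toAddMonoidHom).relIndex (K.map e.toAddMonoidHom) = H.relIndex K := by
  rw [← AddSubgroup.relIndex_comap _ e.toAddMonoidHom,
    AddSubgroup.comap_map_eq_self_of_injective e.injective]

/-- dependent version of `AddSubgroup.index_pi`. -/
lemma index_pi' {η : Type*} [Fintype η] {β : η → Type*} [∀ i, AddCommGroup (β i)]
    (H : ∀ i, AddSubgroup (β i)) :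
    (AddSubgroup.pi Set.univ H).index = ∏ i, (H i).index := by
  simp_rw [AddSubgroup.index, ← Nat.card_pi]
  refine Nat.card_congr
    ((Quotient.congrRight (fun x y ↦ ?_)).trans (Setoid.piQuotientEquiv _).symm)
  rw [QuotientAddGroup.leftRel_pi]

/-- the equivalence between a pi subgroup and the pi of subgroups. -/
def piSubgroupEquiv {η : Type*} {β : η → Type*} [∀ i, AddCommGroup (β i)]
    (K : ∀ i, AddSubgroup (β i)) :
    (AddSubgroup.pi Set.univ K) ≃+ ∀ i, (K i) where
  toFun x i := ⟨x.1 i, x.2 i (Set.mem_univ i)⟩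
  invFun y := ⟨fun i => (y i).1, fun i _ => (y i).2⟩
  left_inv x := rfl
  right_inv y := rfl
  map_add' x y := rfl

lemma relindex_pi' {η : Type*} [Fintype η] {β : η → Type*} [∀ i, AddCommGroup (β i)]
    (H K : ∀ i, AddSubgroup (β i)) :
    (AddSubgroup.pi Set.univ H).relIndex (AddSubgroup.pi Set.univ K)
      = ∏ i, (H i).relIndex (K i) := by
  have key : ((AddSubgroup.pi Set.univ H).addSubgroupOf (AddSubgroup.pi Set.univ K))
      = AddSubgroup.comap (piSubgroupEquiv K).toAddMonoidHom
          (AddSubgroup.pi Set.univ (fun i => (H i).addSubgroupOf (K i))) := by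
    ext x
    simp only [AddSubgroup.mem_addSubgroupOf, AddSubgroup.mem_comap, AddSubgroup.mem_pi,
      Set.mem_univ, forall_true_left]
    rfl
  rw [AddSubgroup.relIndex, key,
    AddSubgroup.index_comap_of_surjective _ (piSubgroupEquiv K).surjective, index_pi']
  rfl

end RelIndex

section Transport

variable (ℓ : ℕ) [Fact (Nat.Prime ℓ)] (C : Type*) [CommGroup C]

@[simp] lemma gSmul_apply {M : Type*} [AddCommGroup M] [Module (MonoidAlgebra ℤ_[ℓ] C) M]
    (r : MonoidAlgebra ℤ_[ℓ] C) (m : M) : gSmul ℓ C M r m = r • m := rfl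

variable {M N : Type*} [AddCommGroup M] [AddCommGroup N]
  [Module (MonoidAlgebra ℤ_[ℓ] C) M] [Module (MonoidAlgebra ℤ_[ℓ] C) N]

lemma map_gSmul_range (e : M ≃ₗ[MonoidAlgebra ℤ_[ℓ] C] N) (r : MonoidAlgebra ℤ_[ℓ] C) :
    ((gSmul ℓ C M r).range).map e.toAddEquiv.toAddMonoidHom = (gSmul ℓ C N r).range := by
  have hsm : ∀ (s : MonoidAlgebra ℤ_[ℓ] C) (m : M),
      e.toAddEquiv (s • m) = s • e.toAddEquiv m := fun s m => e.map_smul s m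
  ext x
  simp only [AddSubgroup.mem_map, AddMonoidHom.mem_range, gSmul_apply,
    AddEquiv.coe_toAddMonoidHom]
  constructor
  · rintro ⟨m, ⟨y, rfl⟩, rfl⟩
    exact ⟨e.toAddEquiv y, (hsm r y).symm⟩
  · rintro ⟨y, rfl⟩
    exact ⟨r • e.toAddEquiv.symm y, ⟨e.toAddEquiv.symm y, rfl⟩,
      by rw [hsm, e.toAddEquiv.apply_symm_apply]⟩

lemma map_gSmul_ker (e : M ≃ₗ[MonoidAlgebra ℤ_[ℓ] C] N) (r : MonoidAlgebra ℤ_[ℓ] C) :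
    ((gSmul ℓ C M r).ker).map e.toAddEquiv.toAddMonoidHom = (gSmul ℓ C N r).ker := by
  have hsm : ∀ (s : MonoidAlgebra ℤ_[ℓ] C) (m : M),
      e.toAddEquiv (s • m) = s • e.toAddEquiv m := fun s m => e.map_smul s m
  ext x
  simp only [AddSubgroup.mem_map, AddMonoidHom.mem_ker, gSmul_apply,
    AddEquiv.coe_toAddMonoidHom]
  constructor
  · rintro ⟨m, hm, rfl⟩
    rw [← hsm, hm, map_zero]
  · intro hx
    refine ⟨e.toAddEquiv.symm x, ?_, e.toAddEquiv.apply_symm_apply x⟩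
    apply e.toAddEquiv.injective
    rw [hsm, e.toAddEquiv.apply_symm_apply, hx, map_zero]

lemma map_gFixed (e : M ≃ₗ[MonoidAlgebra ℤ_[ℓ] C] N) :
    (gFixed ℓ C M).map e.toAddEquiv.toAddMonoidHom = gFixed ℓ C N := by
  have hsm : ∀ (s : MonoidAlgebra ℤ_[ℓ] C) (m : M),
      e.toAddEquiv (s • m) = s • e.toAddEquiv m := fun s m => e.map_smul s m
  unfold gFixed gSub
  ext x
  simp only [AddSubgroup.mem_map, AddSubgroup.mem_iInf, AddMonoidHom.mem_ker, gSmul_apply,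
    AddEquiv.coe_toAddMonoidHom]
  constructor
  · rintro ⟨m, hm, rfl⟩ c
    rw [← hsm, hm c, map_zero]
  · intro hx
    refine ⟨e.toAddEquiv.symm x, fun c => ?_, e.toAddEquiv.apply_symm_apply x⟩
    apply e.toAddEquiv.injective
    rw [hsm, e.toAddEquiv.apply_symm_apply, hx c, map_zero]

variable [Fintype C]

lemma gH0_congr (e : M ≃ₗ[MonoidAlgebra ℤ_[ℓ] C] N) : gH0 ℓ C M = gH0 ℓ C N := by
  unfold gH0 gNorm
  rw [← map_gSmul_range ℓ C e, ← map_gFixed ℓ C e]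
  exact (relindex_map_addEquiv e.toAddEquiv _ _).symm

lemma gH1_congr (e : M ≃ₗ[MonoidAlgebra ℤ_[ℓ] C] N) (σ : C) :
    gH1 ℓ C M σ = gH1 ℓ C N σ := by
  unfold gH1 gNorm gSub
  rw [← map_gSmul_range ℓ C e, ← map_gSmul_ker ℓ C e]
  exact (relindex_map_addEquiv e.toAddEquiv _ _).symm

end Transport

section Pi

variable (ℓ : ℕ) [Fact (Nat.Prime ℓ)] (C : Type*) [CommGroup C]
variable {η : Type*} [Fintype η] (Mf : η → Type*) [∀ j, AddCommGroup (Mf j)]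
  [∀ j, Module (MonoidAlgebra ℤ_[ℓ] C) (Mf j)]

lemma gSmul_range_pi (r : MonoidAlgebra ℤ_[ℓ] C) :
    (gSmul ℓ C (∀ j, Mf j) r).range
      = AddSubgroup.pi Set.univ (fun j => (gSmul ℓ C (Mf j) r).range) := by
  ext m
  simp only [AddMonoidHom.mem_range, gSmul_apply, AddSubgroup.mem_pi, Set.mem_univ,
    forall_true_left]
  constructor
  · rintro ⟨y, rfl⟩ j
    exact ⟨y j, rfl⟩
  · intro hm
    choose g hg using hm
    exact ⟨g, funext fun j => hg j⟩

lemma gSmul_ker_pi (r : MonoidAlgebra ℤ_[ℓ] C) :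
    (gSmul ℓ C (∀ j, Mf j) r).ker
      = AddSubgroup.pi Set.univ (fun j => (gSmul ℓ C (Mf j) r).ker) := by
  ext m
  simp only [AddMonoidHom.mem_ker, gSmul_apply, AddSubgroup.mem_pi, Set.mem_univ,
    forall_true_left, funext_iff]
  rfl

lemma gFixed_pi :
    gFixed ℓ C (∀ j, Mf j) = AddSubgroup.pi Set.univ (fun j => gFixed ℓ C (Mf j)) := by
  unfold gFixed gSub
  ext m
  simp only [AddSubgroup.mem_iInf, AddMonoidHom.mem_ker, gSmul_apply, AddSubgroup.mem_pi,
    Set.mem_univ, forall_true_left, funext_iff]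
  constructor
  · intro hm j c
    exact hm c j
  · intro hm c j
    exact hm j c

variable [Fintype C]

lemma gH0_pi : gH0 ℓ C (∀ j, Mf j) = ∏ j, gH0 ℓ C (Mf j) := by
  unfold gH0 gNorm
  rw [gSmul_range_pi, gFixed_pi, relindex_pi']

lemma gH1_pi (σ : C) : gH1 ℓ C (∀ j, Mf j) σ = ∏ j, gH1 ℓ C (Mf j) σ := by
  unfold gH1 gNorm gSub
  rw [gSmul_range_pi, gSmul_ker_pi, relindex_pi']

end Pi
section Std

open Polynomial

variable (ℓ : ℕ) [Fact (Nat.Prime ℓ)] {C : Type*} [CommGroup C] [Fintype C] (σ : C)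
variable {h : ℕ}

lemma aeval_of_surj (hσ : ∀ c : C, c ∈ Subgroup.zpowers σ) (r : MonoidAlgebra ℤ_[ℓ] C) :
    ∃ P : Polynomial ℤ_[ℓ], aeval (MonoidAlgebra.of ℤ_[ℓ] C σ) P = r := by
  refine MonoidAlgebra.induction_linear
    (motive := fun r => ∃ P : Polynomial ℤ_[ℓ], aeval (MonoidAlgebra.of ℤ_[ℓ] C σ) P = r)
    r ⟨0, map_zero _⟩ ?_ ?_
  · rintro f g ⟨P, hP⟩ ⟨Q, hQ⟩
    exact ⟨P + Q, by rw [map_add, hP, hQ]⟩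
  · intro c a
    obtain ⟨k, hk⟩ := Submonoid.mem_powers_iff _ _ |>.mp
      (mem_powers_iff_mem_zpowers.mpr (hσ c))
    refine ⟨Polynomial.C a * X ^ k, ?_⟩
    rw [map_mul, aeval_C, map_pow, aeval_X, ← map_pow (MonoidAlgebra.of ℤ_[ℓ] C) σ k, hk]
    show MonoidAlgebra.single (1 : C) a * MonoidAlgebra.single c 1 = MonoidAlgebra.single c a
    rw [MonoidAlgebra.single_mul_single, one_mul, mul_one]

lemma aeval_of_ker (hC : Fintype.card C = ℓ ^ h) (hσ : ∀ c : C, c ∈ Subgroup.zpowers σ)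
    {Q : Polynomial ℤ_[ℓ]} (hQ : aeval (MonoidAlgebra.of ℤ_[ℓ] C σ) Q = 0) :
    (X ^ (ℓ ^ h) - 1 : Polynomial ℤ_[ℓ]) ∣ Q := by
  have hord : orderOf σ = ℓ ^ h := by
    rw [orderOf_eq_card_of_forall_mem_zpowers hσ, Nat.card_eq_fintype_card, hC]
  have hN : (ℓ : ℕ) ^ h ≠ 0 := pow_ne_zero _ (Fact.out : Nat.Prime ℓ).pos.ne'
  have hmon : (X ^ (ℓ ^ h) - 1 : Polynomial ℤ_[ℓ]).Monic := by
    simpa using monic_X_pow_sub_C (1 : ℤ_[ℓ]) hN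
  rw [← Polynomial.modByMonic_eq_zero_iff_dvd hmon]
  set m := Q %ₘ (X ^ (ℓ ^ h) - 1 : Polynomial ℤ_[ℓ]) with hm
  have hσN : σ ^ (ℓ ^ h) = 1 := by rw [← hC]; exact pow_card_eq_one
  have h1 : aeval (MonoidAlgebra.of ℤ_[ℓ] C σ) (X ^ (ℓ ^ h) - 1 : Polynomial ℤ_[ℓ]) = 0 := by
    rw [map_sub, map_pow, aeval_X, map_one, ← map_pow (MonoidAlgebra.of ℤ_[ℓ] C) σ, hσN,
      map_one, sub_self]
  have h2 : aeval (MonoidAlgebra.of ℤ_[ℓ] C σ) m = 0 := by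
    have hQm := Polynomial.modByMonic_add_div Q (X ^ (ℓ ^ h) - 1 : Polynomial ℤ_[ℓ])
    have : aeval (MonoidAlgebra.of ℤ_[ℓ] C σ) (m + (X ^ (ℓ ^ h) - 1) * (Q /ₘ (X ^ (ℓ ^ h) - 1)))
        = 0 := by rw [hQm, hQ]
    rwa [map_add, map_mul, h1, zero_mul, add_zero] at this
  have hdegm : m.degree < ((ℓ ^ h : ℕ) : WithBot ℕ) := by
    have := Polynomial.degree_modByMonic_lt Q hmon
    rwa [show (X ^ (ℓ ^ h) - 1 : Polynomial ℤ_[ℓ]) = X ^ (ℓ ^ h) - Polynomial.C 1 by rw [map_one],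
      degree_X_pow_sub_C (Nat.pos_of_ne_zero hN)] at this
  have hdeg : m.natDegree < ℓ ^ h := by
    rcases eq_or_ne m 0 with h0 | h0
    · simpa [h0] using Nat.pos_of_ne_zero hN
    · exact (natDegree_lt_iff_degree_lt h0).mpr hdegm
  have hsum : ∑ k ∈ Finset.range (ℓ ^ h), MonoidAlgebra.single (σ ^ k) (m.coeff k)
      = (0 : MonoidAlgebra ℤ_[ℓ] C) := by
    rw [← h2, aeval_eq_sum_range' hdeg]
    refine Finset.sum_congr rfl fun k _ => ?_
    rw [← map_pow (MonoidAlgebra.of ℤ_[ℓ] C) σ k]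
    show MonoidAlgebra.single (σ ^ k) (m.coeff k)
      = m.coeff k • MonoidAlgebra.single (σ ^ k) (1 : ℤ_[ℓ])
    rw [MonoidAlgebra.smul_single', mul_one]
  have hcoeff : ∀ j < ℓ ^ h, m.coeff j = 0 := by
    intro j hj
    classical
    have hsum' : ∑ k ∈ Finset.range (ℓ ^ h), Finsupp.single (σ ^ k) (m.coeff k)
        = (0 : C →₀ ℤ_[ℓ]) := by
        simpa only [MonoidAlgebra.coeff_sum, MonoidAlgebra.coeff_single,
          MonoidAlgebra.coeff_zero] using congrArg MonoidAlgebra.coeff hsum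
    have happ := DFunLike.congr_fun hsum' (σ ^ j)
    rw [Finsupp.finset_sum_apply, Finsupp.coe_zero, Pi.zero_apply] at happ
    have hrw : ∀ k ∈ Finset.range (ℓ ^ h),
        (Finsupp.single (σ ^ k) (m.coeff k) : C →₀ ℤ_[ℓ]) (σ ^ j)
          = if k = j then m.coeff k else 0 := by
      intro k hk
      rw [Finsupp.single_apply]
      congr 1
      simp only [eq_iff_iff]
      constructor
      · intro he
        have := pow_eq_pow_iff_modEq.mp he
        rw [hord] at this
        rw [← Nat.mod_eq_of_lt (Finset.mem_range.mp hk), ← Nat.mod_eq_of_lt hj]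
        exact this
      · rintro rfl; rfl
    rw [Finset.sum_congr rfl hrw, Finset.sum_ite_eq' (Finset.range (ℓ ^ h))] at happ
    simpa [Finset.mem_range.mpr hj] using happ
  ext j
  rcases lt_or_ge j (ℓ ^ h) with hj | hj
  · simpa using hcoeff j hj
  · simp [Polynomial.coeff_eq_zero_of_natDegree_lt (lt_of_lt_of_le hdeg hj)]


lemma span_reg (hC : Fintype.card C = ℓ ^ h) (hσ : ∀ c : C, c ∈ Subgroup.zpowers σ)
    {i : ℕ} (hi1 : 1 ≤ i) (hih : i ≤ h) (r : MonoidAlgebra ℤ_[ℓ] C)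
    (hr : (MonoidAlgebra.of ℤ_[ℓ] C σ - 1) * r ∈
      Ideal.span {aeval (MonoidAlgebra.of ℤ_[ℓ] C σ) (cyclotomic (ℓ ^ i) ℤ_[ℓ])}) :
    r ∈ Ideal.span {aeval (MonoidAlgebra.of ℤ_[ℓ] C σ) (cyclotomic (ℓ ^ i) ℤ_[ℓ])} := by
  set s := MonoidAlgebra.of ℤ_[ℓ] C σ with hs
  rw [Ideal.mem_span_singleton] at hr ⊢
  obtain ⟨t, ht⟩ := hr
  obtain ⟨P, hP⟩ := aeval_of_surj ℓ σ hσ r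
  obtain ⟨T, hT⟩ := aeval_of_surj ℓ σ hσ t
  have hker : aeval s ((X - 1) * P - cyclotomic (ℓ ^ i) ℤ_[ℓ] * T) = 0 := by
    rw [map_sub, map_mul, map_mul, map_sub, aeval_X, map_one, hP, hT, sub_eq_zero, ← ht]
  obtain ⟨U, hU⟩ := aeval_of_ker ℓ σ hC hσ hker
  have hΦdvd : cyclotomic (ℓ ^ i) ℤ_[ℓ] ∣ X ^ (ℓ ^ h) - 1 := by
    refine (cyclotomic.dvd_X_pow_sub_one (ℓ ^ i) ℤ_[ℓ]).trans ?_
    have hpow : (X : Polynomial ℤ_[ℓ]) ^ (ℓ ^ h) = (X ^ (ℓ ^ i)) ^ (ℓ ^ (h - i)) := by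
      rw [← pow_mul, ← pow_add, Nat.add_sub_cancel' hih]
    calc (X : Polynomial ℤ_[ℓ]) ^ (ℓ ^ i) - 1
        ∣ (X ^ (ℓ ^ i)) ^ (ℓ ^ (h - i)) - 1 ^ (ℓ ^ (h - i)) := sub_dvd_pow_sub_pow _ _ _
      _ = X ^ (ℓ ^ h) - 1 := by rw [← hpow, one_pow]
  have h1 : cyclotomic (ℓ ^ i) ℤ_[ℓ] ∣ (X - 1) * P := by
    have heq : (X - 1) * P = cyclotomic (ℓ ^ i) ℤ_[ℓ] * T + (X ^ (ℓ ^ h) - 1) * U := by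
      rw [← hU]; ring
    rw [heq]
    exact dvd_add (dvd_mul_right _ _) (hΦdvd.mul_right U)
  have hB : (X - 1 : Polynomial ℤ_[ℓ]) ∣ cyclotomic (ℓ ^ i) ℤ_[ℓ] - Polynomial.C (ℓ : ℤ_[ℓ]) := by
    have hdvd := X_sub_C_dvd_sub_C_eval (a := (1 : ℤ_[ℓ])) (p := cyclotomic (ℓ ^ i) ℤ_[ℓ])
    obtain ⟨i', rfl⟩ : ∃ i', i = i' + 1 := ⟨i - 1, (Nat.succ_pred_eq_of_pos hi1).symm⟩
    rwa [eval_one_cyclotomic_prime_pow, map_one] at hdvd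
  obtain ⟨B, hB⟩ := hB
  have h2 : cyclotomic (ℓ ^ i) ℤ_[ℓ] ∣ Polynomial.C (ℓ : ℤ_[ℓ]) * P := by
    have heq : Polynomial.C (ℓ : ℤ_[ℓ]) * P
        = cyclotomic (ℓ ^ i) ℤ_[ℓ] * P - B * ((X - 1) * P) := by
      linear_combination (-P) * hB
    rw [heq]
    exact dvd_sub (dvd_mul_right _ _) (h1.mul_left B)
  obtain ⟨W, hW⟩ := h2
  have hprime : Prime (Polynomial.C (ℓ : ℤ_[ℓ])) := Polynomial.prime_C_iff.mpr PadicInt.prime_p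
  have hnd : ¬ Polynomial.C (ℓ : ℤ_[ℓ]) ∣ cyclotomic (ℓ ^ i) ℤ_[ℓ] := by
    rw [Polynomial.C_dvd_iff_dvd_coeff]
    intro hcon
    have h3 := hcon (cyclotomic (ℓ ^ i) ℤ_[ℓ]).natDegree
    rw [(cyclotomic.monic _ _).coeff_natDegree] at h3
    exact PadicInt.prime_p.not_unit (isUnit_of_dvd_one h3)
  have hdW : Polynomial.C (ℓ : ℤ_[ℓ]) ∣ W :=
    (hprime.dvd_or_dvd ⟨P, hW.symm⟩).resolve_left hnd
  obtain ⟨W', hW'⟩ := hdW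
  have hPf : P = cyclotomic (ℓ ^ i) ℤ_[ℓ] * W' := by
    have hC0 : (Polynomial.C (ℓ : ℤ_[ℓ])) ≠ 0 := hprime.ne_zero
    apply mul_left_cancel₀ hC0
    rw [hW, hW']; ring
  exact ⟨aeval s W', by rw [← hP, hPf, map_mul]⟩

lemma of_pow_sub_one_mem (k : ℕ) :
    MonoidAlgebra.of ℤ_[ℓ] C (σ ^ k) - 1 ∈ Ideal.span {MonoidAlgebra.of ℤ_[ℓ] C σ - 1} := by
  induction k with
  | zero => rw [pow_zero, map_one, sub_self]; exact zero_mem _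
  | succ k ih =>
    have heq : MonoidAlgebra.of ℤ_[ℓ] C (σ ^ (k + 1)) - 1
        = MonoidAlgebra.of ℤ_[ℓ] C σ * (MonoidAlgebra.of ℤ_[ℓ] C (σ ^ k) - 1)
          + (MonoidAlgebra.of ℤ_[ℓ] C σ - 1) := by
      rw [pow_succ, map_mul]; ring
    rw [heq]
    exact add_mem (Ideal.mul_mem_left _ _ ih) (Ideal.subset_span rfl)

lemma mem_span_of_eps_zero (hσ : ∀ c : C, c ∈ Subgroup.zpowers σ)
    (r : MonoidAlgebra ℤ_[ℓ] C)
    (hr : (MonoidAlgebra.lift ℤ_[ℓ] ℤ_[ℓ] C) 1 r = 0) :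
    r ∈ Ideal.span {MonoidAlgebra.of ℤ_[ℓ] C σ - 1} := by
  have haug : ∀ r : MonoidAlgebra ℤ_[ℓ] C,
      r - algebraMap ℤ_[ℓ] (MonoidAlgebra ℤ_[ℓ] C) ((MonoidAlgebra.lift ℤ_[ℓ] ℤ_[ℓ] C) 1 r)
        ∈ Ideal.span {MonoidAlgebra.of ℤ_[ℓ] C σ - 1} := by
    intro r
    refine MonoidAlgebra.induction_on (motive := fun r =>
      r - algebraMap ℤ_[ℓ] (MonoidAlgebra ℤ_[ℓ] C) ((MonoidAlgebra.lift ℤ_[ℓ] ℤ_[ℓ] C) 1 r)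
        ∈ Ideal.span {MonoidAlgebra.of ℤ_[ℓ] C σ - 1}) r ?_ ?_ ?_
    · intro c
      obtain ⟨k, hk⟩ := Submonoid.mem_powers_iff _ _ |>.mp
        (mem_powers_iff_mem_zpowers.mpr (hσ c))
      rw [MonoidAlgebra.lift_of, MonoidHom.one_apply, map_one]
      exact hk ▸ of_pow_sub_one_mem ℓ σ k
    · intro f g hf hg
      rw [map_add, map_add]
      have heq : f + g
            - (algebraMap ℤ_[ℓ] (MonoidAlgebra ℤ_[ℓ] C) ((MonoidAlgebra.lift ℤ_[ℓ] ℤ_[ℓ] C) 1 f)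
              + algebraMap ℤ_[ℓ] (MonoidAlgebra ℤ_[ℓ] C) ((MonoidAlgebra.lift ℤ_[ℓ] ℤ_[ℓ] C) 1 g))
          = (f - algebraMap ℤ_[ℓ] (MonoidAlgebra ℤ_[ℓ] C)
                ((MonoidAlgebra.lift ℤ_[ℓ] ℤ_[ℓ] C) 1 f))
            + (g - algebraMap ℤ_[ℓ] (MonoidAlgebra ℤ_[ℓ] C)
                ((MonoidAlgebra.lift ℤ_[ℓ] ℤ_[ℓ] C) 1 g)) := by
        ring
      rw [heq]
      exact add_mem hf hg
    · intro a f hf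
      rw [map_smul, smul_eq_mul, map_mul, ← Algebra.smul_def, ← smul_sub]
      exact Submodule.smul_of_tower_mem _ a hf
  have h3 := haug r
  rwa [hr, map_zero, sub_zero] at h3

lemma gFixed_quot_eq_bot (I : Ideal (MonoidAlgebra ℤ_[ℓ] C))
    (hreg : ∀ r, (MonoidAlgebra.of ℤ_[ℓ] C σ - 1) * r ∈ I → r ∈ I) :
    gFixed ℓ C (MonoidAlgebra ℤ_[ℓ] C ⧸ I) = ⊥ := by
  rw [AddSubgroup.eq_bot_iff_forall]
  intro x hx
  obtain ⟨r, rfl⟩ := Submodule.Quotient.mk_surjective I x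
  have h1 : Submodule.Quotient.mk r ∈ (gSub ℓ C (MonoidAlgebra ℤ_[ℓ] C ⧸ I) σ).ker :=
    AddSubgroup.mem_iInf.mp hx σ
  rw [AddMonoidHom.mem_ker] at h1
  have h2 : (MonoidAlgebra.of ℤ_[ℓ] C σ - 1)
      • (Submodule.Quotient.mk r : MonoidAlgebra ℤ_[ℓ] C ⧸ I) = 0 := h1
  rw [← Submodule.Quotient.mk_smul, smul_eq_mul, Submodule.Quotient.mk_eq_zero] at h2
  rw [Submodule.Quotient.mk_eq_zero]
  exact hreg r h2

lemma gNorm_ker_quot (hσ : ∀ c : C, c ∈ Subgroup.zpowers σ)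
    (I : Ideal (MonoidAlgebra ℤ_[ℓ] C))
    (hI : I = Ideal.span {MonoidAlgebra.of ℤ_[ℓ] C σ - 1}) :
    (gNorm ℓ C (MonoidAlgebra ℤ_[ℓ] C ⧸ I)).ker = ⊥ := by
  subst hI
  rw [AddSubgroup.eq_bot_iff_forall]
  intro x hx
  obtain ⟨r, rfl⟩ := Submodule.Quotient.mk_surjective _ x
  rw [AddMonoidHom.mem_ker] at hx
  have h2 : (∑ c : C, MonoidAlgebra.of ℤ_[ℓ] C c)
      • (Submodule.Quotient.mk r :
        MonoidAlgebra ℤ_[ℓ] C ⧸ Ideal.span {MonoidAlgebra.of ℤ_[ℓ] C σ - 1}) = 0 := hx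
  rw [← Submodule.Quotient.mk_smul, smul_eq_mul, Submodule.Quotient.mk_eq_zero,
    Ideal.mem_span_singleton] at h2
  obtain ⟨u, hu⟩ := h2
  have hεν : (MonoidAlgebra.lift ℤ_[ℓ] ℤ_[ℓ] C) 1 (∑ c : C, MonoidAlgebra.of ℤ_[ℓ] C c)
      = (Fintype.card C : ℤ_[ℓ]) := by
    rw [map_sum]
    simp [MonoidAlgebra.lift_of]
  have hεs : (MonoidAlgebra.lift ℤ_[ℓ] ℤ_[ℓ] C) 1 (MonoidAlgebra.of ℤ_[ℓ] C σ - 1) = 0 := by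
    rw [map_sub, MonoidAlgebra.lift_of, MonoidHom.one_apply, map_one, sub_self]
  have h3 : (Fintype.card C : ℤ_[ℓ]) * (MonoidAlgebra.lift ℤ_[ℓ] ℤ_[ℓ] C) 1 r = 0 := by
    have h4 := congrArg ((MonoidAlgebra.lift ℤ_[ℓ] ℤ_[ℓ] C) 1) hu
    rwa [map_mul, map_mul, hεs, zero_mul, hεν] at h4
  have h4 : (MonoidAlgebra.lift ℤ_[ℓ] ℤ_[ℓ] C) 1 r = 0 := by
    rcases mul_eq_zero.mp h3 with hcard | h4
    · exact absurd hcard (Nat.cast_ne_zero.mpr Fintype.card_ne_zero)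
    · exact h4
  rw [Submodule.Quotient.mk_eq_zero]
  exact mem_span_of_eps_zero ℓ σ hσ r h4

lemma gH0_std (hC : Fintype.card C = ℓ ^ h) (hσ : ∀ c : C, c ∈ Subgroup.zpowers σ)
    {i : ℕ} (hi1 : 1 ≤ i) (hih : i ≤ h) :
    gH0 ℓ C (gStd ℓ C σ i) = 1 := by
  have hbot : gFixed ℓ C (gStd ℓ C σ i) = ⊥ :=
    gFixed_quot_eq_bot ℓ σ _ (fun r hr => span_reg ℓ σ hC hσ hi1 hih r hr)
  unfold gH0
  rw [hbot]
  exact AddSubgroup.relIndex_eq_one.mpr bot_le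

lemma gH1_std0 (hσ : ∀ c : C, c ∈ Subgroup.zpowers σ) :
    gH1 ℓ C (gStd ℓ C σ 0) σ = 1 := by
  have hid : (Ideal.span {aeval (MonoidAlgebra.of ℤ_[ℓ] C σ) (cyclotomic (ℓ ^ 0) ℤ_[ℓ])})
      = Ideal.span {MonoidAlgebra.of ℤ_[ℓ] C σ - 1} := by
    rw [pow_zero, cyclotomic_one, map_sub, aeval_X, map_one]
  have hbot : (gNorm ℓ C (gStd ℓ C σ 0)).ker = ⊥ := gNorm_ker_quot ℓ σ hσ _ hid
  unfold gH1
  rw [hbot]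
  exact AddSubgroup.relIndex_eq_one.mpr bot_le

end Std

section Assemble

variable (ℓ : ℕ) [Fact (Nat.Prime ℓ)] {C : Type*} [CommGroup C] [Fintype C] (σ : C) {h : ℕ}

lemma gH0_sigma (m : Fin (h + 1) → ℕ) (N : Type*) [AddCommGroup N]
    [Module (MonoidAlgebra ℤ_[ℓ] C) N]
    (eN : N ≃ₗ[MonoidAlgebra ℤ_[ℓ] C]
      ((j : Σ i : Fin (h + 1), Fin (m i)) → gStd ℓ C σ (j.1 : ℕ))) :
    gH0 ℓ C N = ∏ i : Fin (h + 1), gH0 ℓ C (gStd ℓ C σ (i : ℕ)) ^ m i := by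
  rw [gH0_congr ℓ C eN, gH0_pi, ← Finset.univ_sigma_univ, Finset.prod_sigma]
  exact Finset.prod_congr rfl fun i _ => by
    exact Finset.prod_const (M := ℕ) (s := Finset.univ) (gH0 ℓ C (gStd ℓ C σ i)) |>.trans (by simp)

lemma gH1_sigma (m : Fin (h + 1) → ℕ) (N : Type*) [AddCommGroup N]
    [Module (MonoidAlgebra ℤ_[ℓ] C) N]
    (eN : N ≃ₗ[MonoidAlgebra ℤ_[ℓ] C]
      ((j : Σ i : Fin (h + 1), Fin (m i)) → gStd ℓ C σ (j.1 : ℕ))) :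
    gH1 ℓ C N σ = ∏ i : Fin (h + 1), gH1 ℓ C (gStd ℓ C σ (i : ℕ)) σ ^ m i := by
  rw [gH1_congr ℓ C eN σ, gH1_pi, ← Finset.univ_sigma_univ, Finset.prod_sigma]
  exact Finset.prod_congr rfl fun i _ => by
    exact Finset.prod_const (M := ℕ) (s := Finset.univ) (gH1 ℓ C (gStd ℓ C σ i) σ) |>.trans (by simp)

end Assemble

/-- for `C` cyclic of order `ℓ^h` and a finitely generated projective
`ℤℓ[C]`-module `M` whose character is `∑ nᵢ χᵢ` (i.e. `M` is a direct sum of `nᵢ` copies of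
the standard lattices `ℤℓ[C]/(Φ_{ℓ^i}(σ))`), the order of `H²(C,M) = Ĥ⁰(C,M)` depends only
on `n₀`, and the order of `H¹(C,M)` depends only on the `nᵢ` for `i > 0`. -/
theorem stmt_7 (ℓ : ℕ) [Fact (Nat.Prime ℓ)] (h : ℕ)
    (C : Type*) [CommGroup C] [Fintype C] [IsCyclic C]
    (hC : Fintype.card C = ℓ ^ h) (σ : C) (hσ : ∀ c : C, c ∈ Subgroup.zpowers σ)
    (M M' : Type*) [AddCommGroup M] [AddCommGroup M']
    [Module (MonoidAlgebra ℤ_[ℓ] C) M] [Module (MonoidAlgebra ℤ_[ℓ] C) M']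
    (n n' : Fin (h + 1) → ℕ)
    (hM : Nonempty (M ≃ₗ[MonoidAlgebra ℤ_[ℓ] C]
      ((j : Σ i : Fin (h + 1), Fin (n i)) → gStd ℓ C σ (j.1 : ℕ))))
    (hM' : Nonempty (M' ≃ₗ[MonoidAlgebra ℤ_[ℓ] C]
      ((j : Σ i : Fin (h + 1), Fin (n' i)) → gStd ℓ C σ (j.1 : ℕ)))) :
    (n 0 = n' 0 → gH0 ℓ C M = gH0 ℓ C M') ∧
    ((∀ i : Fin (h + 1), i ≠ 0 → n i = n' i) → gH1 ℓ C M σ = gH1 ℓ C M' σ) := by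
  obtain ⟨e⟩ := hM
  obtain ⟨e'⟩ := hM'
  have hle : ∀ i : Fin (h + 1), i ≠ 0 → 1 ≤ (i : ℕ) := by
    intro i hi
    refine Nat.one_le_iff_ne_zero.mpr fun hz => hi (Fin.ext ?_)
    simp [hz]
  constructor
  · intro h0
    rw [gH0_sigma ℓ σ n M e, gH0_sigma ℓ σ n' M' e']
    refine Finset.prod_congr rfl fun i _ => ?_
    rcases eq_or_ne i 0 with rfl | hi
    · rw [h0]
    · rw [gH0_std ℓ σ hC hσ (hle i hi) (Nat.lt_succ_iff.mp i.isLt), one_pow, one_pow]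
  · intro h1
    rw [gH1_sigma ℓ σ n M e, gH1_sigma ℓ σ n' M' e']
    refine Finset.prod_congr rfl fun i _ => ?_
    rcases eq_or_ne i 0 with rfl | hi
    · rw [show ((0 : Fin (h + 1)) : ℕ) = 0 from rfl, gH1_std0 ℓ σ hσ, one_pow, one_pow]
    · rw [h1 i hi]
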